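/- For a connected graph G of order n ≥ 3 and size m with diameter 2, the distance Laplacian energy satisfies DLE(G) = 2(σ(2m/n + 2) − 2m + S_{n−σ−1}(G)), where S_k(G) is the sum of the k largest Laplacian eigenvalues of G and σ (with 1 ≤ σ ≤ n−2) is the number of distance Laplacian eigenvalues of G that are ≥ 2W(G)/n. -/

import Mathlib

open Finset Matrix BigOperators

variable {V : Type*} [Fintype V] [DecidableEq V]

/-- The transmission of a vertex: the sum of distances to all other vertices. -/
noncomputable def transmission (G : SimpleGraph V) (v : V) : ℕ := ∑ u, G.dist v u

/-- The distance matrix of a graph. -/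
noncomputable def distMatrix (G : SimpleGraph V) : Matrix V V ℝ :=
  fun u v => (G.dist u v : ℝ)

/-- The distance Laplacian matrix `Tr(G) - D(G)`. -/
noncomputable def distLap (G : SimpleGraph V) : Matrix V V ℝ :=
  Matrix.diagonal (fun v => (transmission G v : ℝ)) - distMatrix G

/-- The Wiener index of a graph. -/
noncomputable def wiener (G : SimpleGraph V) : ℝ := (∑ v, (transmission G v : ℝ)) / 2

/-- `ρ` lists the eigenvalues of the (Hermitian) matrix `M` in nonincreasing order. -/
def IsSpectrum {n : ℕ} (M : Matrix (Fin n) (Fin n) ℝ) (ρ : Fin n → ℝ) : Prop :=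
  Antitone ρ ∧ ∃ (hM : M.IsHermitian) (e : Fin n ≃ Fin n), ∀ i, ρ i = hM.eigenvalues (e i)

/-- Distance Laplacian energy, given the eigenvalue list `ρ`. -/
noncomputable def DLEnergy {n : ℕ} (G : SimpleGraph (Fin n)) (ρ : Fin n → ℝ) : ℝ :=
  ∑ i, |ρ i - 2 * wiener G / n|

/-- The graph has diameter two. -/
def diamTwo (G : SimpleGraph V) : Prop :=
  (∀ u v, G.dist u v ≤ 2) ∧ ∃ u v, G.dist u v = 2

/-- The multiset of eigenvalues of a Hermitian matrix. -/
noncomputable def eigMultiset (M : Matrix V V ℝ) (hM : M.IsHermitian) : Multiset ℝ :=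
  Finset.univ.val.map hM.eigenvalues

section CharpolyAux
open Polynomial

lemma charpoly_unitary_conj {N : Type*} [Fintype N] [DecidableEq N]
    (U : Matrix.unitaryGroup N ℝ) (A : Matrix N N ℝ) :
    ((U : Matrix N N ℝ) * A * (star U : Matrix N N ℝ)).charpoly = A.charpoly := by
  have hU1 : (U : Matrix N N ℝ) * (star U : Matrix N N ℝ) = 1 :=
    (Matrix.mem_unitaryGroup_iff).mp U.2
  have hmap1 : (C.mapMatrix (U : Matrix N N ℝ)) * (C.mapMatrix (star U : Matrix N N ℝ)) =
      (1 : Matrix N N ℝ[X]) := by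
    rw [← _root_.map_mul, hU1, _root_.map_one]
  have key : charmatrix ((U : Matrix N N ℝ) * A * (star U : Matrix N N ℝ)) =
      (C.mapMatrix (U : Matrix N N ℝ)) * charmatrix A * (C.mapMatrix (star U : Matrix N N ℝ)) := by
    rw [charmatrix, charmatrix, Matrix.mul_sub, Matrix.sub_mul]
    congr 1
    · rw [Matrix.mul_assoc, (Matrix.scalar_commute (X : ℝ[X]) (fun r => Commute.all _ r) _).eq,
        ← Matrix.mul_assoc, hmap1, Matrix.one_mul]
    · rw [_root_.map_mul, _root_.map_mul]
  rw [Matrix.charpoly, Matrix.charpoly, key, Matrix.det_mul, Matrix.det_mul]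
  have h1 : det (C.mapMatrix (U : Matrix N N ℝ)) * det (C.mapMatrix (star U : Matrix N N ℝ)) = 1 := by
    rw [← Matrix.det_mul, hmap1, Matrix.det_one]
  calc det (C.mapMatrix (U : Matrix N N ℝ)) * det (charmatrix A) *
        det (C.mapMatrix (star U : Matrix N N ℝ))
      = det (charmatrix A) * (det (C.mapMatrix (U : Matrix N N ℝ)) *
        det (C.mapMatrix (star U : Matrix N N ℝ))) := by ring
    _ = det (charmatrix A) := by rw [h1, mul_one]

lemma charpoly_eq_of_diag {N : Type*} [Fintype N] [DecidableEq N]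
    (A : Matrix N N ℝ) (U : Matrix.unitaryGroup N ℝ) (d : N → ℝ)
    (h : A = (U : Matrix N N ℝ) * Matrix.diagonal d * (star U : Matrix N N ℝ)) :
    A.charpoly = ∏ i, (X - C (d i)) := by
  rw [h, charpoly_unitary_conj]
  have hc : charmatrix (Matrix.diagonal d) = Matrix.diagonal (fun i => (X : ℝ[X]) - C (d i)) := by
    apply Matrix.ext; intro i j
    by_cases hij : i = j
    · subst hij; rw [charmatrix_apply_eq]; simp
    · rw [charmatrix_apply_ne _ _ _ hij, Matrix.diagonal_apply_ne _ hij,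
        Matrix.diagonal_apply_ne _ hij, map_zero, neg_zero]
  rw [Matrix.charpoly, hc, Matrix.det_diagonal]

lemma eig_multiset_of_diag {N : Type*} [Fintype N] [DecidableEq N]
    {A : Matrix N N ℝ} (hA : A.IsHermitian) (U : Matrix.unitaryGroup N ℝ) (d : N → ℝ)
    (h : A = (U : Matrix N N ℝ) * Matrix.diagonal d * (star U : Matrix N N ℝ)) :
    Multiset.map hA.eigenvalues Finset.univ.val = Multiset.map d Finset.univ.val := by
  have h1 : A.charpoly = ∏ i, (X - C (hA.eigenvalues i)) := by
    refine charpoly_eq_of_diag A hA.eigenvectorUnitary hA.eigenvalues ?_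
    have := hA.spectral_theorem
    simpa using this
  have h2 : A.charpoly = ∏ i, (X - C (d i)) := charpoly_eq_of_diag A U d h
  have h3 := congrArg Polynomial.roots (h1.symm.trans h2)
  have e1 : (∏ i, ((X : ℝ[X]) - C (hA.eigenvalues i))).roots
      = Multiset.map hA.eigenvalues Finset.univ.val := by
    rw [show (∏ i, ((X : ℝ[X]) - C (hA.eigenvalues i)))
        = ((Multiset.map hA.eigenvalues Finset.univ.val).map
          (fun a => (X : ℝ[X]) - C a)).prod from by rw [Multiset.map_map]; rfl]
    exact Polynomial.roots_multiset_prod_X_sub_C _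
  have e2 : (∏ i, ((X : ℝ[X]) - C (d i))).roots = Multiset.map d Finset.univ.val := by
    rw [show (∏ i, ((X : ℝ[X]) - C (d i)))
        = ((Multiset.map d Finset.univ.val).map (fun a => (X : ℝ[X]) - C a)).prod from by
      rw [Multiset.map_map]; rfl]
    exact Polynomial.roots_multiset_prod_X_sub_C _
  rw [e1, e2] at h3; exact h3

lemma trace_eq_sum_of_diag {N : Type*} [Fintype N] [DecidableEq N]
    (A : Matrix N N ℝ) (U : Matrix.unitaryGroup N ℝ) (d : N → ℝ)
    (h : A = (U : Matrix N N ℝ) * Matrix.diagonal d * (star U : Matrix N N ℝ)) :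
    A.trace = ∑ i, d i := by
  have h2 : A.charpoly = ∏ i, (X - C (d i)) := charpoly_eq_of_diag A U d h
  have hsplit : A.charpoly.Splits := by
    rw [h2]; exact Polynomial.Splits.prod (fun i _ => Polynomial.Splits.X_sub_C _)
  rw [Matrix.trace_eq_sum_roots_charpoly_of_splits hsplit, h2]
  rw [show (∏ i, ((X : ℝ[X]) - C (d i)))
      = ((Multiset.map d Finset.univ.val).map (fun a => (X : ℝ[X]) - C a)).prod from by
    rw [Multiset.map_map]; rfl]
  rw [Polynomial.roots_multiset_prod_X_sub_C]
  rfl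

lemma herm_trace {N : Type*} [Fintype N] [DecidableEq N]
    {A : Matrix N N ℝ} (hA : A.IsHermitian) : A.trace = ∑ i, hA.eigenvalues i := by
  refine trace_eq_sum_of_diag A hA.eigenvectorUnitary hA.eigenvalues ?_
  have := hA.spectral_theorem
  simpa using this

end CharpolyAux

section SortAux

lemma antitone_le_of_multiset_eq {n : ℕ} {f g : Fin n → ℝ} (hf : Antitone f) (hg : Antitone g)
    (h : Multiset.map f Finset.univ.val = Multiset.map g Finset.univ.val) (i : Fin n) :
    f i ≤ g i := by
  by_contra hlt
  push_neg at hlt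
  set t := f i with ht
  have hcard : (univ.filter fun j => t ≤ f j).card = (univ.filter fun j => t ≤ g j).card := by
    have h2 : Multiset.filter (fun x => t ≤ x) (Multiset.map f Finset.univ.val)
        = Multiset.filter (fun x => t ≤ x) (Multiset.map g Finset.univ.val) := by rw [h]
    have h3 := congrArg Multiset.card h2
    rw [Multiset.filter_map, Multiset.filter_map, Multiset.card_map, Multiset.card_map] at h3
    convert h3 using 2 <;> simp [Finset.filter, Function.comp]
  have hA : (i : ℕ) + 1 ≤ (univ.filter fun j => t ≤ f j).card := by
    calc (i : ℕ) + 1 = (Finset.Iic i).card := (Fin.card_Iic i).symm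
      _ ≤ _ := by
          apply Finset.card_le_card
          intro j hj
          simp only [Finset.mem_Iic] at hj
          simp only [Finset.mem_filter, Finset.mem_univ, true_and]
          exact hf hj
  have hB : (univ.filter fun j => t ≤ g j).card ≤ (i : ℕ) := by
    calc (univ.filter fun j => t ≤ g j).card ≤ (Finset.Iio i).card := by
          apply Finset.card_le_card
          intro j hj
          simp only [Finset.mem_filter, Finset.mem_univ, true_and] at hj
          simp only [Finset.mem_Iio]
          by_contra hji
          push_neg at hji
          exact absurd (le_trans hj (hg hji)) (not_le.mpr hlt)
      _ = (i : ℕ) := Fin.card_Iio i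
  omega

lemma antitone_eq_of_multiset_eq {n : ℕ} {f g : Fin n → ℝ} (hf : Antitone f) (hg : Antitone g)
    (h : Multiset.map f Finset.univ.val = Multiset.map g Finset.univ.val) : f = g :=
  funext fun i => le_antisymm (antitone_le_of_multiset_eq hf hg h i)
    (antitone_le_of_multiset_eq hg hf h.symm i)

end SortAux

section GraphAux

lemma dist_of_ne {G : SimpleGraph V} [DecidableRel G.Adj] (hconn : G.Connected)
    (hdiam : diamTwo G) {u v : V} (huv : u ≠ v) :
    G.dist u v = if G.Adj u v then 1 else 2 := by
  by_cases hadj : G.Adj u v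
  · simp [hadj, SimpleGraph.dist_eq_one_iff_adj.mpr hadj]
  · simp only [hadj, if_false]
    have h1 : 0 < G.dist u v := hconn.pos_dist_of_ne huv
    have h2 : G.dist u v ≤ 2 := hdiam.1 u v
    have h3 : G.dist u v ≠ 1 := fun hc => hadj (SimpleGraph.dist_eq_one_iff_adj.mp hc)
    omega

lemma transmission_eq {G : SimpleGraph V} [DecidableRel G.Adj] (hconn : G.Connected)
    (hdiam : diamTwo G) (v : V) :
    (transmission G v : ℝ) = 2 * (Fintype.card V) - 2 - G.degree v := by
  have h0 : (transmission G v : ℝ) = ∑ u, (G.dist v u : ℝ) := by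
    rw [transmission]; push_cast; ring
  rw [h0]
  have hsum : ∀ u : V, (G.dist v u : ℝ)
      = 2 - (if u = v then 2 else 0) - (if G.Adj v u then 1 else 0) := by
    intro u
    by_cases huv : u = v
    · subst huv; simp [SimpleGraph.dist_self]
    · rw [dist_of_ne hconn hdiam (Ne.symm huv)]
      by_cases hadj : G.Adj v u <;> simp [hadj, huv] <;> norm_num
  rw [Finset.sum_congr rfl (fun u _ => hsum u)]
  rw [Finset.sum_sub_distrib, Finset.sum_sub_distrib, Finset.sum_const, Finset.sum_ite_eq']
  simp only [Finset.mem_univ, if_true, Finset.card_univ, nsmul_eq_mul]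
  rw [← SimpleGraph.degree_eq_sum_if_adj]
  ring

lemma distLap_eq {G : SimpleGraph V} [DecidableRel G.Adj] (hconn : G.Connected)
    (hdiam : diamTwo G) :
    distLap G = (2 * (Fintype.card V : ℝ)) • (1 : Matrix V V ℝ)
      - (2 : ℝ) • (Matrix.of fun _ _ => (1 : ℝ)) - G.lapMatrix ℝ := by
  apply Matrix.ext; intro u v
  simp only [distLap, distMatrix, Matrix.sub_apply, Matrix.smul_apply, Matrix.one_apply,
    Matrix.of_apply, SimpleGraph.lapMatrix, SimpleGraph.degMatrix, SimpleGraph.adjMatrix_apply,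
    Matrix.diagonal_apply, smul_eq_mul]
  by_cases huv : u = v
  · subst huv
    rw [transmission_eq hconn hdiam]
    simp [SimpleGraph.dist_self, G.loopless.irrefl u]
  · have hd := dist_of_ne hconn hdiam huv
    by_cases hadj : G.Adj u v <;> simp [huv, hadj, hd] <;> ring

lemma distLap_isHermitian (G : SimpleGraph V) : (distLap G).IsHermitian := by
  rw [Matrix.IsHermitian, Matrix.conjTranspose_eq_transpose_of_trivial]
  apply Matrix.ext; intro u v
  simp only [distLap, Matrix.transpose_apply, Matrix.sub_apply, distMatrix]
  by_cases h : u = v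
  · subst h; rfl
  · rw [Matrix.diagonal_apply_ne _ h, Matrix.diagonal_apply_ne _ (Ne.symm h),
      SimpleGraph.dist_comm]

lemma distLap_mulVec' (G : SimpleGraph V) (x : V → ℝ) (u : V) :
    (distLap G *ᵥ x) u = ∑ v, (G.dist u v : ℝ) * (x u - x v) := by
  simp only [distLap, Matrix.sub_mulVec, Pi.sub_apply, Matrix.mulVec_diagonal]
  have h1 : (distMatrix G *ᵥ x) u = ∑ v, (G.dist u v : ℝ) * x v := rfl
  have h2 : (transmission G u : ℝ) * x u = ∑ v, (G.dist u v : ℝ) * x u := by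
    rw [transmission]; push_cast; rw [Finset.sum_mul]
  rw [h1, h2, ← Finset.sum_sub_distrib]
  exact Finset.sum_congr rfl fun v _ => by ring

lemma distLap_posSemidef (G : SimpleGraph V) : (distLap G).PosSemidef := by
  refine Matrix.PosSemidef.of_dotProduct_mulVec_nonneg (distLap_isHermitian G) fun x => ?_
  rw [star_trivial]
  have hquad : x ⬝ᵥ (distLap G *ᵥ x) = ∑ u, ∑ v, (G.dist u v : ℝ) * (x u * (x u - x v)) := by
    rw [dotProduct]
    refine Finset.sum_congr rfl fun u _ => ?_
    rw [distLap_mulVec', Finset.mul_sum]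
    exact Finset.sum_congr rfl fun v _ => by ring
  rw [hquad]
  have hswap : ∑ u, ∑ v, (G.dist u v : ℝ) * (x u * (x u - x v))
      = ∑ u, ∑ v, (G.dist u v : ℝ) * (x v * (x v - x u)) := by
    rw [Finset.sum_comm]
    refine Finset.sum_congr rfl fun u _ => Finset.sum_congr rfl fun v _ => ?_
    rw [SimpleGraph.dist_comm]
  have hdouble : (∑ u, ∑ v, (G.dist u v : ℝ) * (x u * (x u - x v)))
      + ∑ u, ∑ v, (G.dist u v : ℝ) * (x u * (x u - x v))
      = ∑ u, ∑ v, (G.dist u v : ℝ) * (x u - x v) ^ 2 := by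
    nth_rewrite 2 [hswap]
    rw [← Finset.sum_add_distrib]
    refine Finset.sum_congr rfl fun u _ => ?_
    rw [← Finset.sum_add_distrib]
    exact Finset.sum_congr rfl fun v _ => by ring
  have hnn : (0:ℝ) ≤ ∑ u, ∑ v, (G.dist u v : ℝ) * (x u - x v) ^ 2 :=
    Finset.sum_nonneg fun u _ => Finset.sum_nonneg fun v _ =>
      mul_nonneg (Nat.cast_nonneg _) (sq_nonneg _)
  linarith

end GraphAux

section EigBasis
variable {n : ℕ} (G : SimpleGraph (Fin n)) [DecidableRel G.Adj]

lemma lap_col_sum_zero (u : Fin n) : ∑ v, G.lapMatrix ℝ v u = 0 := by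
  have hsymm := SimpleGraph.isSymm_lapMatrix (R := ℝ) G
  have hcol : ∀ v, G.lapMatrix ℝ v u = G.lapMatrix ℝ u v := fun v => hsymm.apply u v
  rw [Finset.sum_congr rfl fun v _ => hcol v]
  have := congrFun (G.lapMatrix_mulVec_const_eq_zero (R := ℝ)) u
  simpa [Matrix.mulVec, dotProduct] using this

lemma basis_sum_zero (hL : (G.lapMatrix ℝ).IsHermitian) (j : Fin n)
    (h : hL.eigenvalues j ≠ 0) : ∑ v, hL.eigenvectorBasis j v = 0 := by
  have hmv := hL.mulVec_eigenvectorBasis j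
  have h1 : ∑ v, (G.lapMatrix ℝ *ᵥ ⇑(hL.eigenvectorBasis j)) v
      = hL.eigenvalues j * ∑ v, hL.eigenvectorBasis j v := by
    rw [hmv]; simp [Finset.mul_sum]
  have h2 : ∑ v, (G.lapMatrix ℝ *ᵥ ⇑(hL.eigenvectorBasis j)) v = 0 := by
    simp only [Matrix.mulVec, dotProduct]
    rw [Finset.sum_comm]
    refine Finset.sum_eq_zero fun u _ => ?_
    rw [← Finset.sum_mul, lap_col_sum_zero G u, zero_mul]
  rw [h2] at h1
  exact (mul_eq_zero.mp h1.symm).resolve_left h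

lemma basis_const (hconn : G.Connected) (hL : (G.lapMatrix ℝ).IsHermitian) (j : Fin n)
    (h : hL.eigenvalues j = 0) (v w : Fin n) :
    hL.eigenvectorBasis j v = hL.eigenvectorBasis j w := by
  have hmv := hL.mulVec_eigenvectorBasis j
  rw [h, zero_smul] at hmv
  have := (G.lapMatrix_mulVec_eq_zero_iff_forall_reachable).mp hmv
  exact this v w (hconn.preconnected v w)

lemma zero_eig_unique (hn : 1 ≤ n) (hconn : G.Connected) (hL : (G.lapMatrix ℝ).IsHermitian)
    (j k : Fin n) (hj : hL.eigenvalues j = 0) (hk : hL.eigenvalues k = 0) : j = k := by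
  by_contra hjk
  have hON := (hL.eigenvectorBasis).orthonormal
  have hij := orthonormal_iff_ite.mp hON j k
  have hjj := orthonormal_iff_ite.mp hON j j
  rw [if_neg hjk] at hij
  rw [if_pos rfl] at hjj
  have v0 : Fin n := ⟨0, by omega⟩
  have hinner : ∀ a b : Fin n, inner ℝ (hL.eigenvectorBasis a) (hL.eigenvectorBasis b)
      = ∑ v, hL.eigenvectorBasis a v * hL.eigenvectorBasis b v := by
    intro a b
    rw [PiLp.inner_apply]
    simp [RCLike.inner_apply, starRingEnd_apply, mul_comm]
  have hcj := basis_const G hconn hL j hj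
  have hck := basis_const G hconn hL k hk
  have e1 : inner ℝ (hL.eigenvectorBasis j) (hL.eigenvectorBasis j)
      = n * (hL.eigenvectorBasis j v0 * hL.eigenvectorBasis j v0) := by
    rw [hinner]
    rw [Finset.sum_congr rfl fun v _ => by rw [hcj v v0]]
    simp [Finset.sum_const, Finset.card_univ]
  have e2 : inner ℝ (hL.eigenvectorBasis j) (hL.eigenvectorBasis k)
      = n * (hL.eigenvectorBasis j v0 * hL.eigenvectorBasis k v0) := by
    rw [hinner]
    rw [Finset.sum_congr rfl fun v _ => by rw [hcj v v0, hck v v0]]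
    simp [Finset.sum_const, Finset.card_univ]
  have hkk := orthonormal_iff_ite.mp hON k k
  rw [if_pos rfl] at hkk
  have e3 : inner ℝ (hL.eigenvectorBasis k) (hL.eigenvectorBasis k)
      = n * (hL.eigenvectorBasis k v0 * hL.eigenvectorBasis k v0) := by
    rw [hinner]
    rw [Finset.sum_congr rfl fun v _ => by rw [hck v v0]]
    simp [Finset.sum_const, Finset.card_univ]
  rw [hij] at e2
  rw [hjj] at e1
  rw [hkk] at e3
  have hn0 : (n : ℝ) ≠ 0 := by positivity
  rcases mul_eq_zero.mp e2.symm with h | h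
  · exact hn0 h
  · rcases mul_eq_zero.mp h with h' | h'
    · rw [h', mul_zero, mul_zero] at e1; norm_num at e1
    · rw [h', mul_zero, mul_zero] at e3; norm_num at e3

lemma distLap_mulVec_basis (hconn : G.Connected) (hdiam : diamTwo G)
    (hL : (G.lapMatrix ℝ).IsHermitian) (j : Fin n) :
    distLap G *ᵥ ⇑(hL.eigenvectorBasis j)
      = (if hL.eigenvalues j = 0 then 0 else 2 * n - hL.eigenvalues j)
        • ⇑(hL.eigenvectorBasis j) := by
  have hmv := hL.mulVec_eigenvectorBasis j
  rw [distLap_eq hconn hdiam, Matrix.sub_mulVec, Matrix.sub_mulVec, hmv]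
  rw [Matrix.smul_mulVec, Matrix.smul_mulVec, Matrix.one_mulVec]
  funext v
  have hJ : ((Matrix.of fun _ _ => (1:ℝ)) *ᵥ ⇑(hL.eigenvectorBasis j)) v
      = ∑ u, hL.eigenvectorBasis j u := by
    simp [Matrix.mulVec, dotProduct]
  by_cases h : hL.eigenvalues j = 0
  · simp only [h, if_pos rfl, zero_smul, Pi.zero_apply, Pi.sub_apply, Pi.smul_apply, hJ,
      smul_eq_mul, zero_smul]
    have hsum : ∑ u, hL.eigenvectorBasis j u = n * hL.eigenvectorBasis j v := by
      rw [Finset.sum_congr rfl fun u _ => basis_const G hconn hL j h u v]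
      simp [Finset.card_univ]
    rw [hsum]
    simp [Fintype.card_fin]
    ring
  · simp only [if_neg h, Pi.sub_apply, Pi.smul_apply, hJ, smul_eq_mul]
    rw [basis_sum_zero G hL j h]
    simp [Fintype.card_fin]
    ring

lemma distLap_decomp (hconn : G.Connected) (hdiam : diamTwo G)
    (hL : (G.lapMatrix ℝ).IsHermitian) :
    distLap G = (hL.eigenvectorUnitary : Matrix (Fin n) (Fin n) ℝ)
      * Matrix.diagonal (fun j => if hL.eigenvalues j = 0 then 0 else 2 * n - hL.eigenvalues j)
      * (star hL.eigenvectorUnitary : Matrix (Fin n) (Fin n) ℝ) := by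
  have hU1 : (hL.eigenvectorUnitary : Matrix (Fin n) (Fin n) ℝ)
      * (star hL.eigenvectorUnitary : Matrix (Fin n) (Fin n) ℝ) = 1 :=
    (Matrix.mem_unitaryGroup_iff).mp hL.eigenvectorUnitary.2
  have hDU : distLap G * (hL.eigenvectorUnitary : Matrix (Fin n) (Fin n) ℝ)
      = (hL.eigenvectorUnitary : Matrix (Fin n) (Fin n) ℝ)
        * Matrix.diagonal (fun j => if hL.eigenvalues j = 0 then 0
            else 2 * n - hL.eigenvalues j) := by
    apply Matrix.ext; intro i j
    rw [Matrix.mul_diagonal]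
    have h1 : (distLap G * (hL.eigenvectorUnitary : Matrix (Fin n) (Fin n) ℝ)) i j
        = (distLap G *ᵥ ⇑(hL.eigenvectorBasis j)) i := by
      simp [Matrix.mul_apply, Matrix.mulVec, dotProduct]
    rw [h1, distLap_mulVec_basis G hconn hdiam hL j]
    simp only [Pi.smul_apply, smul_eq_mul]
    rw [Matrix.IsHermitian.eigenvectorUnitary_apply]
    ring
  calc distLap G = distLap G * 1 := by rw [Matrix.mul_one]
    _ = distLap G * ((hL.eigenvectorUnitary : Matrix (Fin n) (Fin n) ℝ)
        * (star hL.eigenvectorUnitary : Matrix (Fin n) (Fin n) ℝ)) := by rw [hU1]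
    _ = (distLap G * (hL.eigenvectorUnitary : Matrix (Fin n) (Fin n) ℝ))
        * (star hL.eigenvectorUnitary : Matrix (Fin n) (Fin n) ℝ) := by rw [Matrix.mul_assoc]
    _ = _ := by rw [hDU]

end EigBasis

theorem stmt2 {n : ℕ} (hn : 3 ≤ n) (G : SimpleGraph (Fin n)) [DecidableRel G.Adj]
    (hconn : G.Connected) (hdiam : diamTwo G)
    (m : ℕ) (hm : m = G.edgeFinset.card)
    (ρ μ : Fin n → ℝ)
    (hρ : IsSpectrum (distLap G) ρ) (hμ : IsSpectrum (G.lapMatrix ℝ) μ)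
    (σ : ℕ) (hσ : σ = (Finset.univ.filter (fun i => 2 * wiener G / n ≤ ρ i)).card)
    (hσ1 : 1 ≤ σ) (hσ2 : σ ≤ n - 2) :
    DLEnergy G ρ =
      2 * ((σ : ℝ) * (2 * (m : ℝ) / n + 2) - 2 * (m : ℝ) +
        ∑ i ∈ Finset.univ.filter (fun i : Fin n => (i : ℕ) < n - σ - 1), μ i) := by
  obtain ⟨hρa, hDh, eD, hρe⟩ := hρ
  obtain ⟨hμa, hLh, eL, hμe⟩ := hμ
  have hnR : (0:ℝ) < n := by positivity
  have hnR' : (n:ℝ) ≠ 0 := ne_of_gt hnR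
  set last : Fin n := ⟨n-1, by omega⟩ with hlast_def
  set d' : Fin n → ℝ := fun j => if hLh.eigenvalues j = 0 then 0 else 2 * n - hLh.eigenvalues j
    with hd'_def
  have hdec := distLap_decomp G hconn hdiam hLh
  -- multiset identities
  have hmultD : Multiset.map hDh.eigenvalues Finset.univ.val = Multiset.map d' Finset.univ.val :=
    eig_multiset_of_diag hDh hLh.eigenvectorUnitary d' hdec
  have hperm : ∀ (e : Fin n ≃ Fin n), Multiset.map (⇑e) Finset.univ.val = Finset.univ.val := by
    intro e
    have := congrArg Finset.val (Finset.map_univ_equiv e)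
    simpa [Finset.map_val] using this
  have hmultρ : Multiset.map ρ Finset.univ.val = Multiset.map hDh.eigenvalues Finset.univ.val := by
    have : ρ = hDh.eigenvalues ∘ ⇑eD := funext hρe
    rw [this, ← Multiset.map_map, hperm eD]
  have hmultμ : Multiset.map μ Finset.univ.val = Multiset.map hLh.eigenvalues Finset.univ.val := by
    have : μ = hLh.eigenvalues ∘ ⇑eL := funext hμe
    rw [this, ← Multiset.map_map, hperm eL]
  -- zero eigenvalue of the Laplacian
  have hzero_exists : ∃ j, hLh.eigenvalues j = 0 := by
    have hdet0 : (G.lapMatrix ℝ).det = 0 := by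
      rw [← Matrix.exists_mulVec_eq_zero_iff]
      refine ⟨fun _ => 1, ?_, G.lapMatrix_mulVec_const_eq_zero (R := ℝ)⟩
      intro hcon
      have := congrFun hcon last
      norm_num at this
    have hprod := hLh.det_eq_prod_eigenvalues
    rw [hdet0] at hprod
    have := (Finset.prod_eq_zero_iff).mp hprod.symm
    obtain ⟨j, _, hj⟩ := this
    exact ⟨j, by exact_mod_cast hj⟩
  obtain ⟨j0, hj0⟩ := hzero_exists
  have hevnnL : ∀ j, 0 ≤ hLh.eigenvalues j := fun j =>
    (SimpleGraph.posSemidef_lapMatrix ℝ G).eigenvalues_nonneg j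
  have hevnnD : ∀ j, 0 ≤ hDh.eigenvalues j := fun j =>
    (distLap_posSemidef G).eigenvalues_nonneg j
  -- μ at the last index is zero, elsewhere nonzero
  have hμnn : ∀ k, 0 ≤ μ k := fun k => (hμe k) ▸ hevnnL (eL k)
  have hμlast : μ last = 0 := by
    have h1 : μ last ≤ μ (eL.symm j0) := by
      apply hμa
      rw [Fin.le_def]
      simp only [hlast_def]
      omega
    have h2 : μ (eL.symm j0) = 0 := by rw [hμe, Equiv.apply_symm_apply, hj0]
    exact le_antisymm (h2 ▸ h1) (hμnn last)
  have hμne : ∀ k, k ≠ last → μ k ≠ 0 := by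
    intro k hk hc
    have h1 : hLh.eigenvalues (eL k) = 0 := by rw [← hμe]; exact hc
    have h2 : hLh.eigenvalues (eL last) = 0 := by rw [← hμe]; exact hμlast
    exact hk (eL.injective (zero_eig_unique G (by omega) hconn hLh (eL k) (eL last) h1 h2))
  -- nonnegativity of d'
  have hd'nonneg : ∀ j, 0 ≤ d' j := by
    intro j
    have hmem : d' j ∈ Multiset.map d' Finset.univ.val :=
      Multiset.mem_map_of_mem _ (Finset.mem_univ_val j)
    rw [← hmultD] at hmem
    obtain ⟨i, _, hi⟩ := Multiset.mem_map.mp hmem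
    rw [← hi]
    exact hevnnD i
  have hbound : ∀ k, k ≠ last → μ k ≤ 2 * n := by
    intro k hk
    have h1 : hLh.eigenvalues (eL k) ≠ 0 := by rw [← hμe]; exact hμne k hk
    have h2 := hd'nonneg (eL k)
    rw [hd'_def] at h2
    simp only [if_neg h1] at h2
    rw [hμe k]
    linarith
  -- the reversal involution
  set r : Fin n → Fin n := fun i => if h : (i:ℕ) = n-1 then i else ⟨n-2-(i:ℕ), by omega⟩
    with hr_def
  have hrval : ∀ i : Fin n, (i:ℕ) ≠ n-1 → ((r i):ℕ) = n-2-(i:ℕ) := by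
    intro i hi
    simp only [hr_def, dif_neg hi]
  have hrlastval : ∀ i : Fin n, (i:ℕ) = n-1 → r i = i := by
    intro i hi
    simp only [hr_def, dif_pos hi]
  have hrinv : Function.Involutive r := by
    intro i
    by_cases h : (i:ℕ) = n-1
    · rw [hrlastval i h, hrlastval i h]
    · have h1 := hrval i h
      have h2 : ((r i):ℕ) ≠ n-1 := by rw [h1]; have := i.isLt; omega
      apply Fin.ext
      rw [hrval (r i) h2, h1]
      have := i.isLt
      omega
  have hrne : ∀ i : Fin n, (i:ℕ) ≠ n-1 → r i ≠ last := by
    intro i hi hc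
    have := hrval i hi
    rw [hc] at this
    simp only [hlast_def] at this
    have := i.isLt
    omega
  -- the candidate antitone eigenvalue sequence for distLap
  set ρ' : Fin n → ℝ := fun i => d' (eL (r i)) with hρ'_def
  have hρ'last : ∀ i : Fin n, (i:ℕ) = n-1 → ρ' i = 0 := by
    intro i hi
    have hieq : i = last := by apply Fin.ext; simp [hlast_def, hi]
    have hri : r i = last := by rw [hrlastval i hi, hieq]
    simp only [hρ'_def, hri, hd'_def]
    rw [if_pos (by rw [← hμe]; exact hμlast)]
  have hρ'not : ∀ i : Fin n, (i:ℕ) ≠ n-1 → ρ' i = 2 * n - μ (r i) := by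
    intro i hi
    have hne : hLh.eigenvalues (eL (r i)) ≠ 0 := by
      rw [← hμe]; exact hμne (r i) (hrne i hi)
    simp only [hρ'_def, hd'_def, if_neg hne]
    rw [hμe (r i)]
  have hmultρ' : Multiset.map ρ' Finset.univ.val = Multiset.map d' Finset.univ.val := by
    have hepr : ρ' = d' ∘ ⇑((Function.Involutive.toPerm r hrinv).trans eL) := by
      funext i; rfl
    rw [hepr, ← Multiset.map_map, hperm _]
  have hρ'anti : Antitone ρ' := by
    intro i j hij
    by_cases hj : (j:ℕ) = n-1
    · rw [hρ'last j hj]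
      by_cases hi : (i:ℕ) = n-1
      · rw [hρ'last i hi]
      · rw [hρ'not i hi]
        have := hbound (r i) (hrne i hi)
        linarith
    · have hi : (i:ℕ) ≠ n-1 := by
        have h1 : (i:ℕ) ≤ (j:ℕ) := hij
        have := j.isLt
        omega
      rw [hρ'not i hi, hρ'not j hj]
      have hrji : r j ≤ r i := by
        rw [Fin.le_def, hrval i hi, hrval j hj]
        have h1 : (i:ℕ) ≤ (j:ℕ) := hij
        omega
      have := hμa hrji
      linarith
  have hρeq : ρ = ρ' :=
    antitone_eq_of_multiset_eq hρa hρ'anti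
      (hmultρ.trans (hmultD.trans hmultρ'.symm))
  -- trace identities
  have htraceD : (distLap G).trace = ∑ v, (transmission G v : ℝ) := by
    rw [Matrix.trace]
    refine Finset.sum_congr rfl fun v _ => ?_
    simp [Matrix.diag, distLap, distMatrix, SimpleGraph.dist_self]
  have hsumρ : ∑ i, ρ i = ∑ v, (transmission G v : ℝ) := by
    have h1 : ∑ i, ρ i = ∑ i, hDh.eigenvalues (eD i) := Finset.sum_congr rfl fun i _ => hρe i
    rw [h1, Equiv.sum_comp eD hDh.eigenvalues, ← herm_trace hDh, htraceD]
  have hwiener2 : 2 * wiener G = ∑ v, (transmission G v : ℝ) := by rw [wiener]; ring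
  have hdeg : ∑ v, (G.degree v : ℝ) = 2 * m := by
    rw [hm]
    rw [show ∑ v, (G.degree v : ℝ) = ((∑ v, G.degree v : ℕ) : ℝ) by push_cast; ring]
    rw [G.sum_degrees_eq_twice_card_edges]
    push_cast; ring
  have htraceL : (G.lapMatrix ℝ).trace = 2 * m := by
    rw [Matrix.trace]
    have hdiag : ∀ v, (G.lapMatrix ℝ).diag v = (G.degree v : ℝ) := by
      intro v
      simp [Matrix.diag, SimpleGraph.lapMatrix, SimpleGraph.degMatrix]
    rw [Finset.sum_congr rfl fun v _ => hdiag v, hdeg]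
  have hsumμ : ∑ i, μ i = 2 * m := by
    have h1 : ∑ i, μ i = ∑ i, hLh.eigenvalues (eL i) := Finset.sum_congr rfl fun i _ => hμe i
    rw [h1, Equiv.sum_comp eL hLh.eigenvalues, ← herm_trace hLh, htraceL]
  have hTr : ∀ v, (transmission G v : ℝ) = 2 * n - 2 - G.degree v := by
    intro v
    have := transmission_eq hconn hdiam v
    rwa [Fintype.card_fin] at this
  have hW : wiener G = n * ((n:ℝ) - 1) - m := by
    rw [wiener, Finset.sum_congr rfl fun v _ => hTr v]
    rw [Finset.sum_sub_distrib, Finset.sum_sub_distrib, Finset.sum_const, Finset.card_univ,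
      Fintype.card_fin, hdeg, Finset.sum_const, Finset.card_univ, Fintype.card_fin]
    push_cast
    ring
  set c : ℝ := 2 * wiener G / n with hc_def
  have hsumρ' : ∑ i, ρ i = (n:ℝ) * c := by
    rw [hc_def, hwiener2, hsumρ]
    field_simp
  -- the filter is an initial segment
  have hAeq : (univ.filter (fun i : Fin n => c ≤ ρ i))
      = univ.filter (fun i : Fin n => (i:ℕ) < σ) := by
    ext i
    simp only [Finset.mem_filter, Finset.mem_univ, true_and]
    constructor
    · intro hi
      have hsub : Finset.Iic i ⊆ univ.filter (fun j : Fin n => c ≤ ρ j) := by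
        intro j hj
        rw [Finset.mem_filter]
        exact ⟨Finset.mem_univ j, le_trans hi (hρa (Finset.mem_Iic.mp hj))⟩
      have hcard := Finset.card_le_card hsub
      rw [Fin.card_Iic] at hcard
      omega
    · intro hi
      by_contra hni
      have hsub : univ.filter (fun j : Fin n => c ≤ ρ j) ⊆ Finset.Iio i := by
        intro s hs
        rw [Finset.mem_filter] at hs
        rw [Finset.mem_Iio]
        by_contra hsi
        push_neg at hsi
        exact hni (le_trans hs.2 (hρa hsi))
      have hcard := Finset.card_le_card hsub
      rw [Fin.card_Iio] at hcard
      omega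
  -- energy in terms of the top eigenvalues
  have habs : DLEnergy G ρ
      = 2 * ((∑ i ∈ univ.filter (fun i : Fin n => c ≤ ρ i), ρ i) - σ * c) := by
    rw [DLEnergy, ← hc_def]
    rw [← Finset.sum_filter_add_sum_filter_not univ (fun i : Fin n => c ≤ ρ i)]
    rw [Finset.sum_congr rfl (fun i hi =>
      abs_of_nonneg (sub_nonneg.mpr (Finset.mem_filter.mp hi).2))]
    rw [Finset.sum_congr rfl (fun i hi =>
      abs_of_neg (sub_neg.mpr (lt_of_not_ge (Finset.mem_filter.mp hi).2)))]
    have htot := Finset.sum_filter_add_sum_filter_not univ (fun i : Fin n => c ≤ ρ i)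
      (fun i => ρ i - c)
    have huniv : ∑ i : Fin n, (ρ i - c) = 0 := by
      rw [Finset.sum_sub_distrib, Finset.sum_const, Finset.card_univ, Fintype.card_fin,
        nsmul_eq_mul, hsumρ']
      ring
    have hAcard : (univ.filter (fun i : Fin n => c ≤ ρ i)).card = σ := hσ.symm
    have hAsum : ∑ i ∈ univ.filter (fun i : Fin n => c ≤ ρ i), (ρ i - c)
        = (∑ i ∈ univ.filter (fun i : Fin n => c ≤ ρ i), ρ i) - σ * c := by
      rw [Finset.sum_sub_distrib, Finset.sum_const, hAcard, nsmul_eq_mul]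
    rw [Finset.sum_neg_distrib]
    have hnotsum : ∑ i ∈ univ.filter (fun i : Fin n => ¬ c ≤ ρ i), (ρ i - c)
        = - ∑ i ∈ univ.filter (fun i : Fin n => c ≤ ρ i), (ρ i - c) := by
      have := htot
      rw [huniv] at this
      linarith
    rw [hnotsum, hAsum]
    ring
  -- sum of the top σ eigenvalues of the distance Laplacian
  have hF1card : (univ.filter (fun i : Fin n => (i:ℕ) < σ)).card = σ := by
    rw [← hAeq, ← hσ]
  have hsumA : ∑ i ∈ univ.filter (fun i : Fin n => (i:ℕ) < σ), ρ i
      = σ * (2 * n) - ∑ i ∈ univ.filter (fun i : Fin n => (i:ℕ) < σ), μ (r i) := by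
    have hterm : ∀ i ∈ univ.filter (fun i : Fin n => (i:ℕ) < σ), ρ i = 2 * n - μ (r i) := by
      intro i hi
      have h2 := (Finset.mem_filter.mp hi).2
      rw [hρeq]
      exact hρ'not i (by omega)
    rw [Finset.sum_congr rfl hterm, Finset.sum_sub_distrib, Finset.sum_const, hF1card]
    simp only [nsmul_eq_mul]
    try ring
  have himg : ∑ i ∈ univ.filter (fun i : Fin n => (i:ℕ) < σ), μ (r i)
      = ∑ j ∈ (univ.filter (fun i : Fin n => (i:ℕ) < σ)).image r, μ j :=
    (Finset.sum_image (fun a _ b _ h => hrinv.injective h)).symm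
  -- splitting the Laplacian spectrum sum
  have hsplit1 := Finset.sum_filter_add_sum_filter_not univ (fun j : Fin n => (j:ℕ) < n-1) μ
  have hlastset : univ.filter (fun j : Fin n => ¬ (j:ℕ) < n-1) = {last} := by
    ext j
    simp only [Finset.mem_filter, Finset.mem_univ, true_and, Finset.mem_singleton, Fin.ext_iff,
      hlast_def]
    have := j.isLt
    omega
  have hsplit2 := Finset.sum_filter_add_sum_filter_not
    (univ.filter (fun j : Fin n => (j:ℕ) < n-1)) (fun j : Fin n => (j:ℕ) < n - σ - 1) μ
  have hff1 : (univ.filter (fun j : Fin n => (j:ℕ) < n-1)).filter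
      (fun j : Fin n => (j:ℕ) < n - σ - 1)
      = univ.filter (fun j : Fin n => (j:ℕ) < n - σ - 1) := by
    rw [Finset.filter_filter]
    ext j
    simp only [Finset.mem_filter, Finset.mem_univ, true_and]
    omega
  have hff2 : (univ.filter (fun j : Fin n => (j:ℕ) < n-1)).filter
      (fun j : Fin n => ¬ (j:ℕ) < n - σ - 1)
      = (univ.filter (fun i : Fin n => (i:ℕ) < σ)).image r := by
    rw [Finset.filter_filter]
    apply Finset.ext; intro j
    rw [Finset.mem_filter, Finset.mem_image]
    constructor
    · rintro ⟨-, hj1, hj2⟩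
      have hjlt := j.isLt
      refine ⟨r j, ?_, hrinv j⟩
      rw [Finset.mem_filter]
      refine ⟨Finset.mem_univ _, ?_⟩
      rw [hrval j (by omega)]
      omega
    · rintro ⟨i, hi, rfl⟩
      rw [Finset.mem_filter] at hi
      have hi2 := hi.2
      have hilt := i.isLt
      have hival : (i:ℕ) ≠ n-1 := by omega
      refine ⟨Finset.mem_univ _, ?_, ?_⟩
      · rw [hrval i hival]; omega
      · rw [hrval i hival]; omega
  have hμlast0 : ∑ j ∈ univ.filter (fun j : Fin n => ¬ (j:ℕ) < n-1), μ j = 0 := by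
    rw [hlastset, Finset.sum_singleton, hμlast]
  have hsumB : ∑ j ∈ (univ.filter (fun i : Fin n => (i:ℕ) < σ)).image r, μ j
      = 2 * m - ∑ j ∈ univ.filter (fun j : Fin n => (j:ℕ) < n - σ - 1), μ j := by
    rw [hff1, hff2] at hsplit2
    rw [hμlast0] at hsplit1
    rw [hsumμ] at hsplit1
    linarith
  -- final assembly
  rw [habs, hAeq, hsumA, himg, hsumB]
  have hceq : c = (2 * ((n:ℝ) * ((n:ℝ) - 1) - m)) / n := by rw [hc_def, hW]
  rw [hceq]
  field_simp
  ring
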